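/- Let $x_1, x_2$ be i.i.d. with law $S\,\delta_0 + (1-S)\,\mathrm{Unif}(0,1]$ for $S \in [0,1)$. Then the conditional expectations satisfy $\mathbb{E}[x_1 \mid x_1 \le x_2] = \frac{1}{3}\frac{(1-S)^2}{1+S^2}$ and $\mathbb{E}[x_1 \mid x_1 > x_2] = \frac{1}{3}\frac{2+S}{1+S}$. -/

import Mathlib

open MeasureTheory ProbabilityTheory intervalIntegral

/-- The sparse-uniform mixture law `S·δ₀ + (1-S)·Unif(0,1]`. -/
noncomputable def mixLaw (S : ℝ) : Measure ℝ :=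
  (ENNReal.ofReal S) • Measure.dirac 0 +
    (ENNReal.ofReal (1 - S)) • (volume.restrict (Set.Ioc (0:ℝ) 1))

instance (S : ℝ) : SFinite (mixLaw S) := by unfold mixLaw; infer_instance

lemma mixLaw_apply (S : ℝ) (t : Set ℝ) (ht : MeasurableSet t) :
    mixLaw S t = ENNReal.ofReal S * t.indicator 1 0
      + ENNReal.ofReal (1-S) * volume (t ∩ Set.Ioc 0 1) := by
  simp [mixLaw, Measure.add_apply, Measure.smul_apply, Measure.dirac_apply' _ ht,
    Measure.restrict_apply ht, smul_eq_mul]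

lemma mixLaw_Ici (S x : ℝ) (hS : S < 1) (hx : x ∈ Set.Ioc (0:ℝ) 1) :
    mixLaw S (Set.Ici x) = ENNReal.ofReal ((1-S) * (1-x)) := by
  rw [mixLaw_apply _ _ measurableSet_Ici]
  have h1 : Set.indicator (Set.Ici x) (1 : ℝ → ENNReal) 0 = 0 := by
    simp [Set.indicator_of_notMem, not_le.mpr hx.1]
  have h2 : Set.Ici x ∩ Set.Ioc 0 1 = Set.Icc x 1 := by
    ext y; simp only [Set.mem_inter_iff, Set.mem_Ici, Set.mem_Ioc, Set.mem_Icc]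
    exact ⟨fun ⟨a, _, c⟩ => ⟨a, c⟩, fun ⟨a, b⟩ => ⟨a, lt_of_lt_of_le hx.1 a, b⟩⟩
  rw [h1, h2, Real.volume_Icc, mul_zero, zero_add,
    ← ENNReal.ofReal_mul (by linarith : (0:ℝ) ≤ 1 - S)]

lemma mixLaw_Iio (S x : ℝ) (hS : S ∈ Set.Ico (0:ℝ) 1) (hx : x ∈ Set.Ioc (0:ℝ) 1) :
    mixLaw S (Set.Iio x) = ENNReal.ofReal (S + (1-S) * x) := by
  rw [mixLaw_apply _ _ measurableSet_Iio]
  have h1 : Set.indicator (Set.Iio x) (1 : ℝ → ENNReal) 0 = 1 := by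
    simp [hx.1]
  have h2 : Set.Iio x ∩ Set.Ioc 0 1 = Set.Ioo 0 x := by
    ext y; simp only [Set.mem_inter_iff, Set.mem_Iio, Set.mem_Ioc, Set.mem_Ioo]
    exact ⟨fun ⟨h, h1, _⟩ => ⟨h1, h⟩, fun ⟨h1, h⟩ => ⟨h, h1, le_trans h.le hx.2⟩⟩
  rw [h1, h2, Real.volume_Ioo, mul_one, sub_zero,
    ← ENNReal.ofReal_mul (by linarith [hS.2] : (0:ℝ) ≤ 1 - S),
    ← ENNReal.ofReal_add hS.1 (by nlinarith [hS.2, hx.1.le] : 0 ≤ (1-S) * x)]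

lemma mixLaw_Ici_zero (S : ℝ) (hS : S ∈ Set.Ico (0:ℝ) 1) :
    mixLaw S (Set.Ici (0:ℝ)) = 1 := by
  rw [mixLaw_apply _ _ measurableSet_Ici]
  have : Set.Ici (0:ℝ) ∩ Set.Ioc 0 1 = Set.Ioc 0 1 := by
    rw [Set.inter_eq_right]; intro y hy; exact hy.1.le
  rw [this, Real.volume_Ioc]
  simp only [Set.indicator_of_mem (Set.self_mem_Ici), Pi.one_apply, mul_one]
  rw [show (1:ℝ)-0 = 1 by ring, ENNReal.ofReal_one, mul_one,
    ← ENNReal.ofReal_add hS.1 (by linarith [hS.2])]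
  simp

lemma mixLaw_Iio_zero (S : ℝ) : mixLaw S (Set.Iio (0:ℝ)) = 0 := by
  rw [mixLaw_apply _ _ measurableSet_Iio]
  have : Set.Iio (0:ℝ) ∩ Set.Ioc 0 1 = ∅ := by
    ext y; simp only [Set.mem_inter_iff, Set.mem_Iio, Set.mem_Ioc, Set.mem_empty_iff_false,
      iff_false]; rintro ⟨h1, h2, _⟩; linarith
  simp [this]

lemma mixLaw_lintegral (S : ℝ) (f : ℝ → ENNReal) (hf : Measurable f) :
    ∫⁻ x, f x ∂(mixLaw S) = ENNReal.ofReal S * f 0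
      + ENNReal.ofReal (1-S) * ∫⁻ x in Set.Ioc (0:ℝ) 1, f x := by
  simp [mixLaw, lintegral_add_measure, lintegral_smul_measure, lintegral_dirac' _ hf]

lemma lintegral_Ioc_ofReal (g : ℝ → ℝ) (hg : Continuous g)
    (h0 : ∀ x ∈ Set.Ioc (0:ℝ) 1, 0 ≤ g x) :
    ∫⁻ x in Set.Ioc (0:ℝ) 1, ENNReal.ofReal (g x)
      = ENNReal.ofReal (∫ x in Set.Ioc (0:ℝ) 1, g x) := by
  rw [← ofReal_integral_eq_lintegral_ofReal hg.integrableOn_Ioc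
    ((ae_restrict_iff' measurableSet_Ioc).2 (ae_of_all _ h0))]

lemma integral_Ioc_eq_interval (g : ℝ → ℝ) :
    ∫ x in Set.Ioc (0:ℝ) 1, g x = ∫ x in (0:ℝ)..1, g x :=
  (intervalIntegral.integral_of_le zero_le_one).symm

/-- measurable set for `≤` -/
lemma msle : MeasurableSet {p : ℝ × ℝ | p.1 ≤ p.2} :=
  measurableSet_le measurable_fst measurable_snd

lemma msgt : MeasurableSet {p : ℝ × ℝ | p.2 < p.1} :=
  measurableSet_lt measurable_snd measurable_fst


lemma prob_le (S : ℝ) (hS : S ∈ Set.Ico (0:ℝ) 1) :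
    ((mixLaw S).prod (mixLaw S)) {p | p.1 ≤ p.2} = ENNReal.ofReal ((1 + S^2)/2) := by
  have h1S : (0:ℝ) ≤ 1 - S := by linarith [hS.2]
  have hsec : ∀ x : ℝ, Prod.mk x ⁻¹' {p : ℝ × ℝ | p.1 ≤ p.2} = Set.Ici x := fun _ => rfl
  rw [Measure.prod_apply msle]
  simp only [hsec]
  rw [mixLaw_lintegral S (fun x => mixLaw S (Set.Ici x))
      (by simpa only [hsec] using measurable_measure_prodMk_left (ν := mixLaw S) msle),
    mixLaw_Ici_zero S hS,
    setLIntegral_congr_fun measurableSet_Ioc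
      (fun x hx => mixLaw_Ici S x hS.2 hx),
    lintegral_Ioc_ofReal _ (by continuity) (fun x hx => by nlinarith [hx.2]),
    integral_Ioc_eq_interval]
  have : ∫ x in (0:ℝ)..1, (1-S) * (1-x) = (1-S)/2 := by
    have e : ∀ x : ℝ, (1-S)*(1-x) = (1-S) - (1-S)*x := fun x => by ring
    simp only [e]
    rw [integral_sub intervalIntegrable_const
      (intervalIntegrable_id.const_mul _), intervalIntegral.integral_const,
      intervalIntegral.integral_const_mul, integral_id]
    norm_num
    ring
  rw [this, mul_one, ← ENNReal.ofReal_mul h1S,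
    ← ENNReal.ofReal_add hS.1 (by positivity)]
  congr 1; ring

lemma prob_gt (S : ℝ) (hS : S ∈ Set.Ico (0:ℝ) 1) :
    ((mixLaw S).prod (mixLaw S)) {p | p.2 < p.1} = ENNReal.ofReal ((1 - S^2)/2) := by
  have h1S : (0:ℝ) ≤ 1 - S := by linarith [hS.2]
  have hsec : ∀ x : ℝ, Prod.mk x ⁻¹' {p : ℝ × ℝ | p.2 < p.1} = Set.Iio x := fun _ => rfl
  rw [Measure.prod_apply msgt]
  simp only [hsec]
  rw [mixLaw_lintegral S (fun x => mixLaw S (Set.Iio x))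
      (by simpa only [hsec] using measurable_measure_prodMk_left (ν := mixLaw S) msgt),
    mixLaw_Iio_zero S,
    setLIntegral_congr_fun measurableSet_Ioc
      (fun x hx => mixLaw_Iio S x hS hx),
    lintegral_Ioc_ofReal _ (by continuity) (fun x hx => add_nonneg hS.1 (mul_nonneg h1S hx.1.le)),
    integral_Ioc_eq_interval]
  have : ∫ x in (0:ℝ)..1, (S + (1-S) * x) = S + (1-S)/2 := by
    rw [integral_add intervalIntegrable_const
      (intervalIntegrable_id.const_mul _), intervalIntegral.integral_const,
      intervalIntegral.integral_const_mul, integral_id]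
    norm_num
    ring
  rw [this, mul_zero, zero_add, ← ENNReal.ofReal_mul h1S]
  congr 1; ring


lemma int_le (S : ℝ) (hS : S ∈ Set.Ico (0:ℝ) 1) :
    ∫⁻ p in {p : ℝ × ℝ | p.1 ≤ p.2}, ENNReal.ofReal p.1 ∂((mixLaw S).prod (mixLaw S))
      = ENNReal.ofReal ((1-S)^2/6) := by
  have h1S : (0:ℝ) ≤ 1 - S := by linarith [hS.2]
  have hmf : Measurable ({p : ℝ × ℝ | p.1 ≤ p.2}.indicator (fun p => ENNReal.ofReal p.1)) :=
    (ENNReal.measurable_ofReal.comp measurable_fst).indicator msle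
  rw [← lintegral_indicator msle _, MeasureTheory.lintegral_prod _ hmf.aemeasurable]
  have inner : ∀ x : ℝ,
      (∫⁻ y, ({p : ℝ × ℝ | p.1 ≤ p.2}.indicator (fun p => ENNReal.ofReal p.1)) (x, y)
        ∂(mixLaw S)) = ENNReal.ofReal x * mixLaw S (Set.Ici x) := by
    intro x
    have e : ∀ y : ℝ, ({p : ℝ × ℝ | p.1 ≤ p.2}.indicator (fun p => ENNReal.ofReal p.1)) (x, y)
        = (Set.Ici x).indicator (fun _ => ENNReal.ofReal x) y := by
      intro y; by_cases h : x ≤ y <;> simp [Set.indicator, h]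
    simp only [e]
    rw [lintegral_indicator measurableSet_Ici _, setLIntegral_const]
  simp only [inner]
  rw [mixLaw_lintegral S (fun x => ENNReal.ofReal x * mixLaw S (Set.Ici x))
      (ENNReal.measurable_ofReal.mul
        (by simpa [Set.Ici] using measurable_measure_prodMk_left (ν := mixLaw S) msle)),
    setLIntegral_congr_fun measurableSet_Ioc
      (fun x hx => by
        rw [mixLaw_Ici S x hS.2 hx, ← ENNReal.ofReal_mul hx.1.le]),
    lintegral_Ioc_ofReal _ (by continuity) (fun x hx => mul_nonneg hx.1.le (mul_nonneg h1S (by linarith [hx.2]))),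
    integral_Ioc_eq_interval]
  have : ∫ x in (0:ℝ)..1, x * ((1-S) * (1-x)) = (1-S)/6 := by
    have e : ∀ x : ℝ, x * ((1-S)*(1-x)) = (1-S)*x - (1-S)*x^2 := fun x => by ring
    simp only [e]
    rw [integral_sub (intervalIntegrable_id.const_mul _)
      ((intervalIntegrable_pow 2).const_mul _), intervalIntegral.integral_const_mul, intervalIntegral.integral_const_mul,
      integral_id, integral_pow]
    norm_num
    ring
  rw [this]
  simp only [ENNReal.ofReal_zero, zero_mul, mul_zero, zero_add]
  rw [← ENNReal.ofReal_mul h1S]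
  congr 1; ring

lemma int_gt (S : ℝ) (hS : S ∈ Set.Ico (0:ℝ) 1) :
    ∫⁻ p in {p : ℝ × ℝ | p.2 < p.1}, ENNReal.ofReal p.1 ∂((mixLaw S).prod (mixLaw S))
      = ENNReal.ofReal ((1-S)*(2+S)/6) := by
  have h1S : (0:ℝ) ≤ 1 - S := by linarith [hS.2]
  have hmf : Measurable ({p : ℝ × ℝ | p.2 < p.1}.indicator (fun p => ENNReal.ofReal p.1)) :=
    (ENNReal.measurable_ofReal.comp measurable_fst).indicator msgt
  rw [← lintegral_indicator msgt _, MeasureTheory.lintegral_prod _ hmf.aemeasurable]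
  have inner : ∀ x : ℝ,
      (∫⁻ y, ({p : ℝ × ℝ | p.2 < p.1}.indicator (fun p => ENNReal.ofReal p.1)) (x, y)
        ∂(mixLaw S)) = ENNReal.ofReal x * mixLaw S (Set.Iio x) := by
    intro x
    have e : ∀ y : ℝ, ({p : ℝ × ℝ | p.2 < p.1}.indicator (fun p => ENNReal.ofReal p.1)) (x, y)
        = (Set.Iio x).indicator (fun _ => ENNReal.ofReal x) y := by
      intro y; by_cases h : y < x <;> simp [Set.indicator, h]
    simp only [e]
    rw [lintegral_indicator measurableSet_Iio _, setLIntegral_const]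
  simp only [inner]
  rw [mixLaw_lintegral S (fun x => ENNReal.ofReal x * mixLaw S (Set.Iio x))
      (ENNReal.measurable_ofReal.mul
        (by simpa [Set.Iio] using measurable_measure_prodMk_left (ν := mixLaw S) msgt)),
    setLIntegral_congr_fun measurableSet_Ioc
      (fun x hx => by
        rw [mixLaw_Iio S x hS hx, ← ENNReal.ofReal_mul hx.1.le]),
    lintegral_Ioc_ofReal _ (by continuity) (fun x hx => mul_nonneg hx.1.le (add_nonneg hS.1 (mul_nonneg h1S hx.1.le))),
    integral_Ioc_eq_interval]
  have : ∫ x in (0:ℝ)..1, x * (S + (1-S) * x) = S/2 + (1-S)/3 := by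
    have e : ∀ x : ℝ, x * (S + (1-S)*x) = S*x + (1-S)*x^2 := fun x => by ring
    simp only [e]
    rw [integral_add (intervalIntegrable_id.const_mul _)
      ((intervalIntegrable_pow 2).const_mul _), intervalIntegral.integral_const_mul, intervalIntegral.integral_const_mul,
      integral_id, integral_pow]
    norm_num
    ring
  rw [this]
  simp only [ENNReal.ofReal_zero, zero_mul, mul_zero, zero_add]
  rw [← ENNReal.ofReal_mul h1S]
  congr 1; ring


theorem stmt3 {Ω : Type*} [MeasureSpace Ω] [IsProbabilityMeasure (ℙ : Measure Ω)]
    (S : ℝ) (hS : S ∈ Set.Ico (0:ℝ) 1)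
    (X1 X2 : Ω → ℝ) (hX1 : Measurable X1) (hX2 : Measurable X2)
    (hindep : IndepFun X1 X2)
    (hL1 : Measure.map X1 ℙ = mixLaw S) (hL2 : Measure.map X2 ℙ = mixLaw S) :
    (∫ ω, X1 ω ∂(ℙ[|{ω | X1 ω ≤ X2 ω}])) = (1/3) * ((1 - S)^2 / (1 + S^2)) ∧
    (∫ ω, X1 ω ∂(ℙ[|{ω | X2 ω < X1 ω}])) = (1/3) * ((2 + S) / (1 + S)) := by
  have hS0 := hS.1
  have hS1 := hS.2
  have h1S : (0:ℝ) < 1 - S := by linarith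
  set ν : Measure (ℝ × ℝ) := (mixLaw S).prod (mixLaw S) with hν
  have hpair : Measurable (fun ω => (X1 ω, X2 ω)) := hX1.prodMk hX2
  have hmap : Measure.map (fun ω => (X1 ω, X2 ω)) ℙ = ν := by
    rw [(indepFun_iff_map_prod_eq_prod_map_map hX1.aemeasurable hX2.aemeasurable).1 hindep,
      hL1, hL2]
  -- a.e. nonnegativity of the first coordinate under ν
  have hneg : ν {p : ℝ × ℝ | p.1 < 0} = 0 := by
    have he : {p : ℝ × ℝ | p.1 < 0} = (Set.Iio 0) ×ˢ (Set.univ : Set ℝ) := by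
      ext p; simp
    rw [hν, he, Measure.prod_prod, mixLaw_Iio_zero, zero_mul]
  have hae : ∀ᵐ p ∂ν, 0 ≤ p.1 := by
    rw [ae_iff]; simpa [not_le] using hneg
  have key : ∀ s : Set (ℝ × ℝ), MeasurableSet s →
      (∫ ω, X1 ω ∂(ℙ[|(fun ω => (X1 ω, X2 ω)) ⁻¹' s]))
        = ((ν s).toReal)⁻¹ * (∫⁻ p in s, ENNReal.ofReal p.1 ∂ν).toReal := by
    intro s hs
    have hPA : ℙ ((fun ω => (X1 ω, X2 ω)) ⁻¹' s) = ν s := by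
      rw [← hmap, Measure.map_apply hpair hs]
    rw [ProbabilityTheory.cond, MeasureTheory.integral_smul_measure, hPA, ENNReal.toReal_inv, smul_eq_mul]
    congr 1
    have h1 : (∫ ω in (fun ω => (X1 ω, X2 ω)) ⁻¹' s, X1 ω ∂ℙ)
        = ∫ p in s, p.1 ∂ν := by
      rw [← hmap, setIntegral_map hs (measurable_fst.aestronglyMeasurable) hpair.aemeasurable]
    rw [h1, integral_eq_lintegral_of_nonneg_ae (ae_restrict_of_ae hae)
      measurable_fst.aestronglyMeasurable]
  constructor
  · have : {ω | X1 ω ≤ X2 ω} = (fun ω => (X1 ω, X2 ω)) ⁻¹' {p : ℝ × ℝ | p.1 ≤ p.2} := rfl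
    rw [this, key _ msle]
    simp only [hν]
    rw [show ((mixLaw S).prod (mixLaw S)) {p : ℝ × ℝ | p.1 ≤ p.2}
        = ENNReal.ofReal ((1 + S^2)/2) from prob_le S hS,
      show (∫⁻ p in {p : ℝ × ℝ | p.1 ≤ p.2}, ENNReal.ofReal p.1 ∂((mixLaw S).prod (mixLaw S)))
        = ENNReal.ofReal ((1-S)^2/6) from int_le S hS,
      ENNReal.toReal_ofReal (by positivity), ENNReal.toReal_ofReal (by positivity)]
    have hd : (1:ℝ) + S^2 ≠ 0 := by positivity
    field_simp
    ring
  · have : {ω | X2 ω < X1 ω} = (fun ω => (X1 ω, X2 ω)) ⁻¹' {p : ℝ × ℝ | p.2 < p.1} := rfl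
    rw [this, key _ msgt]
    simp only [hν]
    rw [show ((mixLaw S).prod (mixLaw S)) {p : ℝ × ℝ | p.2 < p.1}
        = ENNReal.ofReal ((1 - S^2)/2) from prob_gt S hS,
      show (∫⁻ p in {p : ℝ × ℝ | p.2 < p.1}, ENNReal.ofReal p.1 ∂((mixLaw S).prod (mixLaw S)))
        = ENNReal.ofReal ((1-S)*(2+S)/6) from int_gt S hS,
      ENNReal.toReal_ofReal (by nlinarith), ENNReal.toReal_ofReal (by nlinarith)]
    have h2 : (1:ℝ) + S ≠ 0 := by positivity
    have h3 : (1:ℝ) - S^2 ≠ 0 := by nlinarith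
    rw [show (1:ℝ) - S^2 = (1-S)*(1+S) by ring]
    field_simp
    ring
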